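/- arXiv:1808.09927 — 2 statements merged into one kernel-verified Lean document; each statement's English description precedes it below -/
import Mathlib

section
/- Reversing all edges of a directed cut in an oriented graph changes the associated divisor v ↦ indeg(v) − 1 by a principal divisor (an element of the image of the Laplacian): specifically, if all edges of the cut are directed from S to its complement, reversing them changes the divisor by Δ(𝟙_S). -/
open Finset

/-- Reversing all edges of a directed cut (all edges between `S` and its complement being
directed out of `S`) changes the divisor `v ↦ indeg v - 1` by the principal divisor
`Δ(𝟙_S)`, where `Δ` is the graph Laplacian of the underlying multigraph. -/
theorem directed_cut_reversal_divisor {V E : Type*} [Fintype V] [Fintype E]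
    [DecidableEq V] [DecidableEq E]
    (head tail : E → V) (hloop : ∀ e, head e ≠ tail e)
    (S : Finset V)
    (hcut : ∀ e, head e ∈ S → tail e ∈ S)  -- no edge enters S: every cut edge leaves S
    (head' tail' : E → V)
    (hhead' : ∀ e, head' e = if tail e ∈ S ∧ head e ∉ S then tail e else head e)
    (htail' : ∀ e, tail' e = if tail e ∈ S ∧ head e ∉ S then head e else tail e)
    (indeg indeg' : V → ℤ)
    (hindeg : ∀ w, indeg w = (univ.filter (fun e => head e = w)).card)
    (hindeg' : ∀ w, indeg' w = (univ.filter (fun e => head' e = w)).card)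
    (m : V → V → ℤ)
    (hm : ∀ u v, m u v =
      (univ.filter (fun e => (tail e = u ∧ head e = v) ∨ (tail e = v ∧ head e = u))).card)
    (indicator : V → ℤ) (hind : ∀ v, indicator v = if v ∈ S then 1 else 0) :
    ∀ v, (indeg' v - 1) - (indeg v - 1) =
      ∑ w : V, m v w * (indicator v - indicator w) := by
  intro v
  have hms : ∀ w : V, m v w * (indicator v - indicator w)
      = ∑ e : E, if (tail e = v ∧ head e = w) ∨ (tail e = w ∧ head e = v)
          then indicator v - indicator w else 0 := by
    intro w
    rw [hm, Finset.card_filter]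
    push_cast
    rw [Finset.sum_mul]
    refine Finset.sum_congr rfl fun e _ => ?_
    split_ifs <;> ring
  have hinner : ∀ e : E,
      (∑ w : V, if (tail e = v ∧ head e = w) ∨ (tail e = w ∧ head e = v)
          then indicator v - indicator w else 0)
      = (if tail e = v then indicator v - indicator (head e) else 0) +
        (if head e = v then indicator v - indicator (tail e) else 0) := by
    intro e
    have hl := hloop e
    have hsplit : ∀ w : V,
        (if (tail e = v ∧ head e = w) ∨ (tail e = w ∧ head e = v)
            then indicator v - indicator w else 0) =
        (if w = head e then (if tail e = v then indicator v - indicator w else 0) else 0) +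
        (if w = tail e then (if head e = v then indicator v - indicator w else 0) else 0) := by
      intro w
      by_cases ha : w = head e <;> by_cases hb : w = tail e <;>
        by_cases hc : tail e = v <;> by_cases hd : head e = v <;>
          simp_all [eq_comm] <;> omega
    rw [Finset.sum_congr rfl (fun w _ => hsplit w), Finset.sum_add_distrib,
      Finset.sum_ite_eq', Finset.sum_ite_eq']
    simp
  have key : ∀ e : E,
      ((if head' e = v then (1:ℤ) else 0) - (if head e = v then 1 else 0)) =
      (if tail e = v then indicator v - indicator (head e) else 0) +
      (if head e = v then indicator v - indicator (tail e) else 0) := by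
    intro e
    have hc := hcut e
    have hl := hloop e
    rw [hhead', hind, hind, hind]
    by_cases hr : tail e ∈ S ∧ head e ∉ S
    · simp only [if_pos hr]
      by_cases ht : tail e = v
      · have hh : head e ≠ v := fun h => hl (h.trans ht.symm)
        have hv : v ∈ S := ht ▸ hr.1
        simp only [if_pos ht, if_neg hh, if_pos hv, if_neg hr.2]
        ring
      · simp only [if_neg ht]
        by_cases hh : head e = v
        · have hv : v ∉ S := hh ▸ hr.2
          simp only [if_pos hh, if_neg hv, if_pos hr.1]
          ring
        · simp only [if_neg hh]; ring
    · simp only [if_neg hr]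
      by_cases ht : tail e = v
      · have hh : head e ≠ v := fun h => hl (h.trans ht.symm)
        simp only [if_pos ht, if_neg hh]
        have heq : (if v ∈ S then (1:ℤ) else 0) = (if head e ∈ S then 1 else 0) := by
          by_cases hv : v ∈ S
          · have hhs : head e ∈ S := by
              by_contra hne
              exact hr ⟨ht.symm ▸ hv, hne⟩
            rw [if_pos hv, if_pos hhs]
          · have hhs : head e ∉ S := fun hne => hv (ht ▸ hc hne)
            rw [if_neg hv, if_neg hhs]
        rw [heq]; ring
      · simp only [if_neg ht]
        by_cases hh : head e = v
        · simp only [if_pos hh]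
          have heq : (if v ∈ S then (1:ℤ) else 0) = (if tail e ∈ S then 1 else 0) := by
            by_cases hv : v ∈ S
            · rw [if_pos hv, if_pos (hc (hh.symm ▸ hv))]
            · have hts : tail e ∉ S := by
                intro hts
                by_cases hhs : head e ∈ S
                · exact hv (hh ▸ hhs)
                · exact hr ⟨hts, hhs⟩
              rw [if_neg hv, if_neg hts]
          rw [heq]; ring
        · simp only [if_neg hh]; ring
  calc (indeg' v - 1) - (indeg v - 1)
      = ∑ e : E, ((if head' e = v then (1:ℤ) else 0) - (if head e = v then 1 else 0)) := by
        rw [Finset.sum_sub_distrib, hindeg, hindeg', Finset.card_filter, Finset.card_filter]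
        push_cast
        ring
    _ = ∑ e : E, ((if tail e = v then indicator v - indicator (head e) else 0) +
          (if head e = v then indicator v - indicator (tail e) else 0)) :=
        Finset.sum_congr rfl fun e _ => key e
    _ = ∑ w : V, m v w * (indicator v - indicator w) := by
        rw [Finset.sum_congr rfl (fun w _ => hms w), Finset.sum_comm]
        exact Finset.sum_congr rfl fun e _ => (hinner e).symm
end

section
/- If two orientations O and O' of a finite connected graph G are related by a sequence of directed cycle reversals and directed cut reversals, then their associated divisors D_O and D_{O'} (given by v ↦ indeg(v) − 1) are linearly equivalent, i.e., D_O − D_{O'} ∈ Prin(G). -/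
open Finset

variable {V E : Type*} [Fintype V] [Fintype E] [DecidableEq V] [DecidableEq E]

/-- The indegree of `v` in the orientation `o` (where `(o e).1` is the tail of the edge
`e` and `(o e).2` is its head). -/
def orientIndeg (o : E → V × V) (v : V) : ℕ :=
  (univ.filter (fun e => (o e).2 = v)).card

/-- `o'` is obtained from `o` by reversing all edges of a directed cycle: a set of edges
each of whose incident vertices has exactly one incoming and one outgoing edge in it. -/
def CycleReversal (o o' : E → V × V) : Prop :=
  ∃ C : Finset E,
    (∀ v : V, (∃ e ∈ C, (o e).1 = v ∨ (o e).2 = v) →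
      (C.filter (fun e => (o e).2 = v)).card = 1 ∧
      (C.filter (fun e => (o e).1 = v)).card = 1) ∧
    ∀ e, o' e = if e ∈ C then ((o e).2, (o e).1) else o e

/-- `o'` is obtained from `o` by reversing all edges of a directed cut: for some vertex
set `S` with no edge directed into `S` from outside, all edges from `S` to its complement
are reversed. -/
def CutReversal (o o' : E → V × V) : Prop :=
  ∃ S : Finset V,
    (∀ e, (o e).2 ∈ S → (o e).1 ∈ S) ∧
    ∀ e, o' e = if (o e).1 ∈ S ∧ (o e).2 ∉ S then ((o e).2, (o e).1) else o e

/-- Number of edges between `u` and `w` (the underlying multigraph). -/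
def multE (o : E → V × V) (u w : V) : ℕ :=
  (univ.filter (fun e => ((o e).1 = u ∧ (o e).2 = w) ∨ ((o e).1 = w ∧ (o e).2 = u))).card

lemma multE_eq_of_swap {o o' : E → V × V}
    (h : ∀ e, o' e = o e ∨ o' e = ((o e).2, (o e).1)) (u w : V) :
    multE o' u w = multE o u w := by
  unfold multE
  congr 1
  apply Finset.filter_congr
  intro e _
  rcases h e with he | he <;> simp [he] <;> tauto

lemma step_swap {o o' : E → V × V} (h : CycleReversal o o' ∨ CutReversal o o') :
    ∀ e, o' e = o e ∨ o' e = ((o e).2, (o e).1) := by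
  rcases h with ⟨C, _, ho'⟩ | ⟨S, _, ho'⟩ <;> intro e <;> rw [ho' e] <;>
    [skip; skip] <;> split <;> simp

lemma indeg_of_cycle {o o' : E → V × V} (h : CycleReversal o o') (v : V) :
    orientIndeg o' v = orientIndeg o v := by
  obtain ⟨C, hC, ho'⟩ := h
  have key : (C.filter (fun e => (o e).1 = v)).card = (C.filter (fun e => (o e).2 = v)).card := by
    by_cases hv : ∃ e ∈ C, (o e).1 = v ∨ (o e).2 = v
    · obtain ⟨h1, h2⟩ := hC v hv
      rw [h1, h2]
    · push_neg at hv
      rw [Finset.filter_false_of_mem, Finset.filter_false_of_mem]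
      · intro e he; exact (hv e he).2
      · intro e he; exact (hv e he).1
  have split : ∀ (p : E → Prop) [DecidablePred p],
      (univ.filter p).card = (C.filter p).card + ((univ \ C).filter p).card := by
    intro p _
    rw [← Finset.card_union_of_disjoint, ← Finset.filter_union, Finset.union_sdiff_of_subset (Finset.subset_univ C)]
    exact Finset.disjoint_filter_filter (Finset.disjoint_sdiff)
  unfold orientIndeg
  have h1 : (univ.filter (fun e => (o' e).2 = v)) =
      (C.filter (fun e => (o e).1 = v)) ∪ ((univ \ C).filter (fun e => (o e).2 = v)) := by
    ext e
    simp only [Finset.mem_filter, Finset.mem_union, Finset.mem_univ, true_and, Finset.mem_sdiff]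
    rw [ho' e]
    by_cases he : e ∈ C <;> simp [he]
  rw [h1, Finset.card_union_of_disjoint, key]
  · rw [split (fun e => (o e).2 = v)]
  · exact Finset.disjoint_filter_filter (Finset.disjoint_sdiff)

lemma cut_diff {o o' : E → V × V} (h : CutReversal o o') :
    ∃ f : V → ℤ, ∀ v, ((orientIndeg o v : ℤ) - orientIndeg o' v) =
      ∑ w : V, (multE o v w : ℤ) * (f v - f w) := by
  obtain ⟨S, hS, ho'⟩ := h
  refine ⟨fun v => if v ∈ S then 0 else 1, fun v => ?_⟩
  have hind : ∀ (p : E → V × V),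
      ((orientIndeg p v : ℤ)) = ∑ e : E, if (p e).2 = v then (1 : ℤ) else 0 := by
    intro p
    rw [orientIndeg, Finset.card_filter]
    push_cast
    rfl
  have hmultE : ∀ w, ((multE o v w : ℤ)) = ∑ e : E,
      if (((o e).1 = v ∧ (o e).2 = w) ∨ ((o e).1 = w ∧ (o e).2 = v)) then (1 : ℤ) else 0 := by
    intro w
    rw [multE, Finset.card_filter]
    push_cast
    rfl
  rw [hind, hind, ← Finset.sum_sub_distrib]
  have : ∀ w, (multE o v w : ℤ) * ((if v ∈ S then (0:ℤ) else 1) - (if w ∈ S then (0:ℤ) else 1)) =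
      ∑ e : E, (if (((o e).1 = v ∧ (o e).2 = w) ∨ ((o e).1 = w ∧ (o e).2 = v)) then (1 : ℤ) else 0)
        * ((if v ∈ S then (0:ℤ) else 1) - (if w ∈ S then (0:ℤ) else 1)) := by
    intro w
    rw [hmultE w, Finset.sum_mul]
  rw [Finset.sum_congr rfl (fun w _ => this w), Finset.sum_comm]
  apply Finset.sum_congr rfl
  intro e _
  have hcutS := hS e
  rw [ho' e]
  set F : V → ℤ := fun w => if w ∈ S then (0:ℤ) else 1 with hF
  by_cases ht : (o e).1 = v <;> by_cases hh : (o e).2 = v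
  · -- loop at v
    have hcut : ¬ ((o e).1 ∈ S ∧ (o e).2 ∉ S) := by rw [ht, hh]; tauto
    have hR : (∑ w : V, (if (((o e).1 = v ∧ (o e).2 = w) ∨ ((o e).1 = w ∧ (o e).2 = v)) then (1 : ℤ) else 0) * (F v - F w)) = 0 := by
      apply Finset.sum_eq_zero
      intro w _
      by_cases hw : (o e).2 = w
      · have hwv : w = v := hw.symm.trans hh
        simp [hwv]
      · have : ¬ (((o e).1 = v ∧ (o e).2 = w) ∨ ((o e).1 = w ∧ (o e).2 = v)) := by
          rintro (⟨_, h⟩ | ⟨h, _⟩)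
          · exact hw h
          · exact hw (hh.trans (ht.symm.trans h))
        simp [this]
    rw [hR]
    simp [ht, hh]
  · -- tail is v, head isn't
    have hc : ∀ w : V, (((o e).1 = v ∧ (o e).2 = w) ∨ ((o e).1 = w ∧ (o e).2 = v)) ↔ ((o e).2 = w) := by
      intro w
      constructor
      · rintro (⟨_, h⟩ | ⟨_, h⟩)
        · exact h
        · exact absurd h hh
      · intro h; exact Or.inl ⟨ht, h⟩
    have hR : (∑ w : V, (if (((o e).1 = v ∧ (o e).2 = w) ∨ ((o e).1 = w ∧ (o e).2 = v)) then (1 : ℤ) else 0) * (F v - F w)) = F v - F (o e).2 := by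
      rw [Finset.sum_congr rfl (fun w _ => by
        rw [if_congr (hc w) rfl rfl, ite_mul, zero_mul, one_mul])]
      rw [Finset.sum_ite_eq univ (o e).2 (fun w => F v - F w)]
      simp
    rw [hR]
    by_cases hvS : v ∈ S
    · by_cases hhS : (o e).2 ∈ S
      · have hcut : ¬ ((o e).1 ∈ S ∧ (o e).2 ∉ S) := fun hc => hc.2 hhS
        simp [hF, hcut, ht, hh, hvS, hhS]
      · have hcut : ((o e).1 ∈ S ∧ (o e).2 ∉ S) := ⟨ht ▸ hvS, hhS⟩
        simp [hF, hcut, ht, hh, hvS, hhS]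
    · have hhS : (o e).2 ∉ S := fun hc => hvS (ht ▸ hcutS hc)
      have hcut : ¬ ((o e).1 ∈ S ∧ (o e).2 ∉ S) := fun hc => hvS (ht ▸ hc.1)
      simp [hF, hcut, ht, hh, hvS, hhS]
  · -- head is v, tail isn't
    have hc : ∀ w : V, (((o e).1 = v ∧ (o e).2 = w) ∨ ((o e).1 = w ∧ (o e).2 = v)) ↔ ((o e).1 = w) := by
      intro w
      constructor
      · rintro (⟨h, _⟩ | ⟨h, _⟩)
        · exact absurd h ht
        · exact h
      · intro h; exact Or.inr ⟨h, hh⟩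
    have hR : (∑ w : V, (if (((o e).1 = v ∧ (o e).2 = w) ∨ ((o e).1 = w ∧ (o e).2 = v)) then (1 : ℤ) else 0) * (F v - F w)) = F v - F (o e).1 := by
      rw [Finset.sum_congr rfl (fun w _ => by
        rw [if_congr (hc w) rfl rfl, ite_mul, zero_mul, one_mul])]
      rw [Finset.sum_ite_eq univ (o e).1 (fun w => F v - F w)]
      simp
    rw [hR]
    by_cases hvS : v ∈ S
    · have htS : (o e).1 ∈ S := hcutS (hh ▸ hvS)
      have hcut : ¬ ((o e).1 ∈ S ∧ (o e).2 ∉ S) := fun hc => hc.2 (hh ▸ hvS)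
      simp [hF, hcut, ht, hh, hvS, htS]
    · by_cases htS : (o e).1 ∈ S
      · have hcut : ((o e).1 ∈ S ∧ (o e).2 ∉ S) := ⟨htS, hh ▸ hvS⟩
        simp [hF, hcut, ht, hh, hvS, htS]
      · have hcut : ¬ ((o e).1 ∈ S ∧ (o e).2 ∉ S) := fun hc => htS hc.1
        simp [hF, hcut, ht, hh, hvS, htS]
  · -- not incident
    have hR : (∑ w : V, (if (((o e).1 = v ∧ (o e).2 = w) ∨ ((o e).1 = w ∧ (o e).2 = v)) then (1 : ℤ) else 0) * (F v - F w)) = 0 := by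
      apply Finset.sum_eq_zero
      intro w _
      have : ¬ (((o e).1 = v ∧ (o e).2 = w) ∨ ((o e).1 = w ∧ (o e).2 = v)) := by
        rintro (⟨h, _⟩ | ⟨_, h⟩)
        · exact ht h
        · exact hh h
      simp [this]
    rw [hR]
    by_cases hcut : (o e).1 ∈ S ∧ (o e).2 ∉ S <;> simp [hcut, ht, hh]

/-- If two orientations of a finite graph are related by a sequence of directed cycle
reversals and directed cut reversals, then their divisors `v ↦ indeg v - 1` differ by a
principal divisor (an image of the Laplacian of the underlying multigraph). -/
theorem divisors_linearly_equivalent_of_reversals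
    (O O' : E → V × V)
    (hrel : Relation.ReflTransGen
      (fun o o' : E → V × V => CycleReversal o o' ∨ CutReversal o o') O O')
    (m : V → V → ℤ)
    (hm : ∀ u v, m u v = (univ.filter
      (fun e => ((O e).1 = u ∧ (O e).2 = v) ∨ ((O e).1 = v ∧ (O e).2 = u))).card) :
    ∃ f : V → ℤ, ∀ v,
      ((orientIndeg O v : ℤ) - 1) - ((orientIndeg O' v : ℤ) - 1) =
        ∑ w : V, m v w * (f v - f w) := by
  have hmO : ∀ u w, m u w = (multE O u w : ℤ) := fun u w => hm u w
  have hmult : ∀ o', Relation.ReflTransGen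
      (fun o o' : E → V × V => CycleReversal o o' ∨ CutReversal o o') O o' →
      ∀ u w, multE o' u w = multE O u w := by
    intro o' h
    induction h with
    | refl => intro u w; rfl
    | tail _ step ih =>
      intro u w
      rw [multE_eq_of_swap (step_swap step) u w, ih u w]
  induction hrel with
  | refl => exact ⟨0, by simp⟩
  | @tail b c hb hbc ih =>
    obtain ⟨f, hf⟩ := ih
    rcases hbc with hcyc | hcut
    · exact ⟨f, fun v => by rw [indeg_of_cycle hcyc v]; exact hf v⟩
    · obtain ⟨g, hg⟩ := cut_diff hcut
      refine ⟨f + g, fun v => ?_⟩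
      have hmb : ∀ w, (multE b v w : ℤ) = m v w := by
        intro w; rw [hmult b hb v w, hmO v w]
      have h2 : ((orientIndeg b v : ℤ) - orientIndeg c v) = ∑ w : V, m v w * (g v - g w) := by
        rw [hg v]
        exact Finset.sum_congr rfl (fun w _ => by rw [hmb w])
      have h1 := hf v
      have hsplit : ((orientIndeg O v : ℤ) - 1) - ((orientIndeg c v : ℤ) - 1) =
          (((orientIndeg O v : ℤ) - 1) - ((orientIndeg b v : ℤ) - 1)) +
          ((orientIndeg b v : ℤ) - (orientIndeg c v : ℤ)) := by ring
      rw [hsplit, h1, h2, ← Finset.sum_add_distrib]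
      exact Finset.sum_congr rfl (fun w _ => by simp only [Pi.add_apply]; ring)
end
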